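/- Frobenius-norm residual bound for low-rank matrix perturbation. Let X, Z ∈ ℝ^{m×n}, Y = X + Z, and suppose rank(X) ≤ r. Let Û ∈ ℝ^{m×r} satisfy ÛᵀÛ = I_r, let Û_⊥ ∈ ℝ^{m×(m−r)} satisfy Û_⊥ᵀÛ_⊥ = I_{m−r} and ÛᵀÛ_⊥ = 0, and assume ‖Û_⊥ᵀ Y‖_F ≤ ‖Y − B‖_F for every matrix B ∈ ℝ^{m×n} with rank(B) ≤ r (this holds in particular when the columns of Û are leading r left singular vectors of Y). Then ‖Û_⊥ᵀ X‖_F ≤ 2‖Z‖_F. -/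
import Mathlib


open Matrix BigOperators

noncomputable section

/-- Squared Frobenius norm of a matrix. -/
def mfrobSq {ι κ : Type*} [Fintype ι] [Fintype κ] (A : Matrix ι κ ℝ) : ℝ :=
  ∑ i, ∑ j, A i j ^ 2

/-- Frobenius norm of a matrix. -/
def mfrob {ι κ : Type*} [Fintype ι] [Fintype κ] (A : Matrix ι κ ℝ) : ℝ :=
  Real.sqrt (mfrobSq A)

attribute [local instance] Matrix.frobeniusSeminormedAddCommGroup

lemma mfrob_eq_norm {ι κ : Type*} [Fintype ι] [Fintype κ] (A : Matrix ι κ ℝ) :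
    mfrob A = ‖A‖ := by
  rw [Matrix.frobenius_norm_def, mfrob, mfrobSq, Real.sqrt_eq_rpow]
  congr 1
  refine Finset.sum_congr rfl fun i _ => Finset.sum_congr rfl fun j _ => ?_
  rw [Real.norm_eq_abs, show (2:ℝ) = ((2:ℕ):ℝ) by norm_num, Real.rpow_natCast, sq_abs]

lemma mfrobSq_eq_trace {ι κ : Type*} [Fintype ι] [Fintype κ] (A : Matrix ι κ ℝ) :
    mfrobSq A = (Aᵀ * A).trace := by
  simp only [Matrix.trace, Matrix.diag_apply, Matrix.mul_apply, Matrix.transpose_apply, mfrobSq]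
  rw [Finset.sum_comm]
  simp [sq]

lemma mfrobSq_nonneg {ι κ : Type*} [Fintype ι] [Fintype κ] (A : Matrix ι κ ℝ) :
    0 ≤ mfrobSq A :=
  Finset.sum_nonneg fun _ _ => Finset.sum_nonneg fun _ _ => sq_nonneg _

lemma mfrob_proj_le {ι κ μ : Type*} [Fintype ι] [Fintype κ] [Fintype μ]
    [DecidableEq ι] [DecidableEq μ]
    (W : Matrix ι μ ℝ) (hW : Wᵀ * W = 1) (Z : Matrix ι κ ℝ) :
    mfrob (Wᵀ * Z) ≤ mfrob Z := by
  apply Real.sqrt_le_sqrt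
  set P : Matrix ι ι ℝ := W * Wᵀ with hP
  have hPsymm : Pᵀ = P := by simp [hP, Matrix.transpose_mul]
  have hPidem : P * P = P := by
    rw [hP, Matrix.mul_assoc, ← Matrix.mul_assoc Wᵀ, hW, Matrix.one_mul]
  have h1 : mfrobSq (Wᵀ * Z) = (Zᵀ * (P * Z)).trace := by
    rw [mfrobSq_eq_trace]
    congr 1
    rw [Matrix.transpose_mul, Matrix.transpose_transpose, hP,
      Matrix.mul_assoc, Matrix.mul_assoc]
  have hQ : (1 - P) * ((1 - P) * Z) = (1 - P) * Z := by
    rw [← Matrix.mul_assoc]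
    congr 1
    rw [Matrix.sub_mul, Matrix.mul_sub, Matrix.mul_sub,
      Matrix.one_mul, Matrix.mul_one, hPidem, sub_self, sub_zero, Matrix.one_mul]
  have h2 : mfrobSq Z - mfrobSq (Wᵀ * Z) = mfrobSq ((1 - P) * Z) := by
    rw [mfrobSq_eq_trace, h1, mfrobSq_eq_trace]
    have e : ((1 - P) * Z)ᵀ * ((1 - P) * Z) = Zᵀ * Z - Zᵀ * (P * Z) := by
      rw [Matrix.transpose_mul, Matrix.transpose_sub, Matrix.transpose_one, hPsymm,
        Matrix.mul_assoc, hQ, Matrix.sub_mul, Matrix.one_mul, Matrix.mul_sub]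
    rw [e, Matrix.trace_sub]
  nlinarith [mfrobSq_nonneg ((1 - P) * Z), h2]

/-- Frobenius-norm residual bound for low-rank matrix perturbation
(second part of Lemma 6 of Zhang–Han, 2018): `‖Û_⊥ᵀ X‖_F ≤ 2‖Z‖_F`. -/
theorem low_rank_perturbation_residual_frobenius
    (m n r : ℕ) (X Z : Matrix (Fin m) (Fin n) ℝ) (hrank : X.rank ≤ r)
    (Uhat : Matrix (Fin m) (Fin r) ℝ) (Uhatperp : Matrix (Fin m) (Fin (m - r)) ℝ)
    (hUhat : Uhatᵀ * Uhat = 1) (hUhatperp : Uhatperpᵀ * Uhatperp = 1)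
    (hUhato : Uhatᵀ * Uhatperp = 0)
    (hlead : ∀ B : Matrix (Fin m) (Fin n) ℝ, B.rank ≤ r →
      mfrob (Uhatperpᵀ * (X + Z)) ≤ mfrob (X + Z - B)) :
    mfrob (Uhatperpᵀ * X) ≤ 2 * mfrob Z := by
  have hY := hlead X hrank
  have hYZ : X + Z - X = Z := by abel
  rw [hYZ] at hY
  have h3 := mfrob_proj_le Uhatperp hUhatperp Z
  have htri : mfrob (Uhatperpᵀ * X) ≤ mfrob (Uhatperpᵀ * (X + Z)) + mfrob (Uhatperpᵀ * Z) := by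
    have e : Uhatperpᵀ * X = Uhatperpᵀ * (X + Z) - Uhatperpᵀ * Z := by
      rw [Matrix.mul_add]; abel
    rw [e, mfrob_eq_norm, mfrob_eq_norm, mfrob_eq_norm]
    exact norm_sub_le _ _
  linarith


end
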